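/- In the real twisted group algebra on the dyadic group G_n (nonnegative integers < 2^n under xor) with the Cayley-Dickson twist, every element x satisfies x·conj(x) = conj(x)·x = ‖x‖², where ‖x‖² = Σ_p x_p² and conj(x) = 2x_0·1 - x. Consequently x² = 2x_0·x - ‖x‖². -/

import Mathlib

set_option linter.unusedVariables false
/-- The Cayley–Dickson twist on ℕ (group operation: bitwise xor), defined by the
recursion γ(0,0)=1, γ(2r,2s)=γ(r,s), γ(2r,2s+1)=-γ(r,s) for r≠0, γ(0,2s+1)=1,
γ(2r+1,2s)=γ(s,r), γ(2r+1,2s+1)=γ(s,r) for r≠0, γ(1,2s+1)=-1. -/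
def cd (p q : ℕ) : ℤ :=
  if hp2 : p % 2 = 0 then
    if hq2 : q % 2 = 0 then
      if hpq : p = 0 ∧ q = 0 then 1
      else cd (p / 2) (q / 2)
    else
      if hp : p = 0 then 1 else -cd (p / 2) (q / 2)
  else
    if hq2 : q % 2 = 0 then cd (q / 2) (p / 2)
    else if hp : p = 1 then -1 else cd (q / 2) (p / 2)
termination_by p + q
decreasing_by all_goals omega


lemma cd_unit (p q : ℕ) : cd p q = 1 ∨ cd p q = -1 := by
  induction p, q using cd.induct with
  | _ => rw [cd]; simp_all; try omega

lemma cd_sq (p q : ℕ) : cd p q * cd p q = 1 := by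
  rcases cd_unit p q with h | h <;> rw [h] <;> norm_num

lemma cd_zero_left (q : ℕ) : cd 0 q = 1 := by
  induction q using Nat.strong_induction_on with
  | _ q ih =>
    rw [cd]; split_ifs with h1 h2 h3 <;> simp_all
    exact ih (q/2) (by omega)

lemma cd_zero_right (p : ℕ) : cd p 0 = 1 := by
  induction p using Nat.strong_induction_on with
  | _ p ih =>
    rw [cd]; split_ifs with h1 h2 <;> simp_all
    · exact ih (p/2) (by omega)
    · exact cd_zero_left (p/2)

lemma cd_self (p : ℕ) (hp : p ≠ 0) : cd p p = -1 := by
  induction p using Nat.strong_induction_on with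
  | _ p ih =>
    rw [cd]; split_ifs with h1 h2 h3 h4 <;> simp_all
    · exact ih (p/2) (by omega) (by omega)
    · exact ih (p/2) (by omega) (by omega)

lemma cd_ee (r s : ℕ) : cd (2*r) (2*s) = cd r s := by
  rcases eq_or_ne r 0 with h | h
  · subst h; simp [cd_zero_left]
  · rw [cd]
    have h1 : (2*r) % 2 = 0 := by omega
    have h2 : (2*r) / 2 = r := by omega
    have h3 : (2*s) % 2 = 0 := by omega
    have h4 : (2*s) / 2 = s := by omega
    simp [h1, h2, h3, h4]
    omega

lemma cd_oe (r s : ℕ) : cd (2*r+1) (2*s) = cd s r := by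
  rw [cd]
  have h1 : (2*r+1) % 2 = 1 := by omega
  have h2 : (2*r+1) / 2 = r := by omega
  have h3 : (2*s) % 2 = 0 := by omega
  have h4 : (2*s) / 2 = s := by omega
  simp [h1, h2, h3, h4]

lemma cd_eo (r s : ℕ) : cd (2*r) (2*s+1) = if r = 0 then 1 else -cd r s := by
  rw [cd]
  have h1 : (2*s+1) % 2 = 1 := by omega
  have h2 : (2*s+1) / 2 = s := by omega
  split_ifs with a b c <;> simp_all <;> omega

lemma cd_oo (r s : ℕ) : cd (2*r+1) (2*s+1) = if r = 0 then -1 else cd s r := by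
  rw [cd]
  have h1 : (2*r+1) % 2 = 1 := by omega
  have h2 : (2*s+1) / 2 = s := by omega
  have h3 : (2*r+1) / 2 = r := by omega
  split_ifs with a b c <;> simp_all <;> omega

lemma cd_anti_eo (r s : ℕ) :
    cd (2*r) (2*s+1) * cd (2*s+1) (2*r) = -(cd (2*r) (2*r) * cd (2*s+1) (2*s+1)) := by
  have hqq : cd (2*s+1) (2*s+1) = -1 := cd_self (2*s+1) (by omega)
  rw [cd_eo, cd_oe, cd_ee, hqq]
  rcases eq_or_ne r 0 with h | h
  · subst h; simp [cd_zero_left]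
  · rw [if_neg h, cd_self r h]
    have := cd_sq r s
    linarith

lemma cd_anti_aux (N : ℕ) : ∀ p q, p + q ≤ N → p ≠ q →
    cd p q * cd q p = -(cd p p * cd q q) := by
  induction N with
  | zero => intro p q h hne; omega
  | succ N ih =>
    intro p q hpq hne
    rcases Nat.even_or_odd p with ⟨r, hr⟩ | ⟨r, hr⟩ <;>
      rcases Nat.even_or_odd q with ⟨s, hs⟩ | ⟨s, hs⟩
    · -- even even
      have hp : p = 2*r := by omega
      have hq : q = 2*s := by omega
      subst hp hq
      rw [cd_ee, cd_ee, cd_ee, cd_ee]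
      exact ih r s (by omega) (by omega)
    · -- even odd
      have hp : p = 2*r := by omega
      have hq : q = 2*s+1 := by omega
      subst hp hq
      exact cd_anti_eo r s
    · -- odd even
      have hp : p = 2*r+1 := by omega
      have hq : q = 2*s := by omega
      subst hp hq
      linear_combination cd_anti_eo s r
    · -- odd odd
      have hp : p = 2*r+1 := by omega
      have hq : q = 2*s+1 := by omega
      subst hp hq
      rw [cd_oo, cd_oo, cd_oo, cd_oo]
      have hrs : r ≠ s := by omega
      rcases eq_or_ne r 0 with h | h <;> rcases eq_or_ne s 0 with h' | h'
      · omega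
      · simp [h, h', cd_zero_left, cd_self s h']
      · simp [h, h', cd_zero_left, cd_self r h]
      · simp only [if_neg h, if_neg h', cd_self r h, cd_self s h']
        have := ih s r (by omega) (Ne.symm hrs)
        rw [cd_self r h, cd_self s h'] at this
        linarith

lemma cd_anti (p q : ℕ) (h : p ≠ q) : cd p q * cd q p = -(cd p p * cd q q) :=
  cd_anti_aux (p+q) p q le_rfl h

lemma keyA (p q : ℕ) (h : p ≠ q) : (cd p q : ℝ) * cd q q + cd q p * cd p p = 0 := by
  have h1 := cd_anti p q h
  rcases cd_unit p q with a | a <;> rcases cd_unit q p with b | b <;>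
    rcases cd_unit p p with c | c <;> rcases cd_unit q q with d | d <;>
    rw [a, b, c, d] at h1 ⊢ <;> norm_num at h1 <;> norm_num

lemma keyB (p q : ℕ) (h : p ≠ q) : (cd p q : ℝ) * cd p p + cd q p * cd q q = 0 := by
  have h1 := cd_anti p q h
  rcases cd_unit p q with a | a <;> rcases cd_unit q p with b | b <;>
    rcases cd_unit p p with c | c <;> rcases cd_unit q q with d | d <;>
    rw [a, b, c, d] at h1 ⊢ <;> norm_num at h1 <;> norm_num

open Finset

/-- Xor on `Fin (2^n)` (the dyadic group `G_n`). -/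
def xorFin {n : ℕ} (p q : Fin (2 ^ n)) : Fin (2 ^ n) :=
  ⟨p.val ^^^ q.val, Nat.xor_lt_two_pow p.isLt q.isLt⟩

/-- The twisted (Cayley–Dickson) product on `Fin (2^n) → ℝ`:
`(x*y)_r = ∑_{p ^^^ q = r} γ(p,q) x_p y_q`. -/
def cdMul {n : ℕ} (x y : Fin (2 ^ n) → ℝ) : Fin (2 ^ n) → ℝ :=
  fun r => ∑ p : Fin (2 ^ n), (cd p.val (p.val ^^^ r.val) : ℝ) * x p * y (xorFin p r)

/-- The conjugate `conj(x) = ∑_p γ(p,p) x_p i_p`. -/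
def cdConj {n : ℕ} (x : Fin (2 ^ n) → ℝ) : Fin (2 ^ n) → ℝ :=
  fun p => (cd p.val p.val : ℝ) * x p

/-- The unit scalar `1 = i_0`. -/
def cdOne {n : ℕ} : Fin (2 ^ n) → ℝ :=
  fun p => if p.val = 0 then 1 else 0

lemma xor_ne_self {p r : ℕ} (h : r ≠ 0) : p ^^^ r ≠ p := by
  intro he
  apply h
  have h2 : p ^^^ (p ^^^ r) = p ^^^ p := congrArg (p ^^^ ·) he
  simpa [← Nat.xor_assoc] using h2

lemma xorFin_invol {n : ℕ} (p r : Fin (2 ^ n)) : xorFin (xorFin p r) r = p := by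
  simp [xorFin, Fin.ext_iff, Nat.xor_assoc]

lemma xorFin_xor_val {n : ℕ} (p r : Fin (2 ^ n)) :
    (xorFin p r).val ^^^ r.val = p.val := by
  simp [xorFin, Nat.xor_assoc]

theorem stmt16 {n : ℕ} (x : Fin (2 ^ n) → ℝ) :
    cdConj x = (2 * x ⟨0, Nat.pow_pos (by norm_num)⟩) • cdOne - x ∧
    cdMul x (cdConj x) = (∑ p, x p ^ 2) • cdOne ∧
    cdMul (cdConj x) x = (∑ p, x p ^ 2) • cdOne ∧
    cdMul x x = (2 * x ⟨0, Nat.pow_pos (by norm_num)⟩) • x - (∑ p, x p ^ 2) • cdOne := by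
  set z : Fin (2 ^ n) := ⟨0, Nat.pow_pos (by norm_num)⟩ with hz
  have part1 : cdConj x = (2 * x z) • cdOne - x := by
    funext p
    simp only [cdConj, cdOne, Pi.sub_apply, Pi.smul_apply, smul_eq_mul]
    rcases eq_or_ne p.val 0 with h | h
    · have hp : p = z := Fin.ext (by rw [hz]; exact h)
      rw [h, hp, if_pos rfl, cd_zero_left]
      push_cast
      ring
    · rw [cd_self p.val h, if_neg h]
      push_cast
      ring
  have part2 : cdMul x (cdConj x) = (∑ p, x p ^ 2) • cdOne := by
    funext r
    simp only [cdMul, cdConj, cdOne, Pi.smul_apply, smul_eq_mul]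
    rcases eq_or_ne r.val 0 with h | h
    · have hr : ∀ p : Fin (2 ^ n), xorFin p r = p := by
        intro p; ext; simp [xorFin, h]
      have hv : ∀ p : Fin (2 ^ n), p.val ^^^ r.val = p.val := by
        intro p; simp [h]
      rw [if_pos h, mul_one]
      refine Finset.sum_congr rfl fun p _ => ?_
      rw [hr, hv]
      have := cd_sq p.val p.val
      have h2 : (cd p.val p.val : ℝ) * (cd p.val p.val : ℝ) = 1 := by
        exact_mod_cast congrArg (Int.cast : ℤ → ℝ) this
      nlinarith [h2]
    · rw [if_neg h, mul_zero]
      refine Finset.sum_involution (fun p _ => xorFin p r) ?_ ?_ (fun p hp => mem_univ _) ?_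
      · intro p hp
        have hne : p.val ≠ (xorFin p r).val := by
          exact fun he => xor_ne_self h he.symm
        have key := keyA p.val (xorFin p r).val hne
        have hq : (xorFin p r).val ^^^ r.val = p.val := xorFin_xor_val p r
        have hval : (xorFin p r).val = p.val ^^^ r.val := rfl
        rw [xorFin_invol, hq, ← hval]
        linear_combination (x p * x (xorFin p r)) * key
      · intro p hp _
        intro he
        exact xor_ne_self h (congrArg Fin.val he)
      · intro p hp
        exact xorFin_invol p r
  have part3 : cdMul (cdConj x) x = (∑ p, x p ^ 2) • cdOne := by
    funext r
    simp only [cdMul, cdConj, cdOne, Pi.smul_apply, smul_eq_mul]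
    rcases eq_or_ne r.val 0 with h | h
    · have hr : ∀ p : Fin (2 ^ n), xorFin p r = p := by
        intro p; ext; simp [xorFin, h]
      have hv : ∀ p : Fin (2 ^ n), p.val ^^^ r.val = p.val := by
        intro p; simp [h]
      rw [if_pos h, mul_one]
      refine Finset.sum_congr rfl fun p _ => ?_
      rw [hr, hv]
      have := cd_sq p.val p.val
      have h2 : (cd p.val p.val : ℝ) * (cd p.val p.val : ℝ) = 1 := by
        exact_mod_cast congrArg (Int.cast : ℤ → ℝ) this
      nlinarith [h2]
    · rw [if_neg h, mul_zero]
      refine Finset.sum_involution (fun p _ => xorFin p r) ?_ ?_ (fun p hp => mem_univ _) ?_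
      · intro p hp
        have hne : p.val ≠ (xorFin p r).val := by
          exact fun he => xor_ne_self h he.symm
        have key := keyB p.val (xorFin p r).val hne
        have hq : (xorFin p r).val ^^^ r.val = p.val := xorFin_xor_val p r
        have hval : (xorFin p r).val = p.val ^^^ r.val := rfl
        rw [xorFin_invol, hq, ← hval]
        linear_combination (x p * x (xorFin p r)) * key
      · intro p hp _
        intro he
        exact xor_ne_self h (congrArg Fin.val he)
      · intro p hp
        exact xorFin_invol p r
  refine ⟨part1, part2, part3, ?_⟩
  have hx : ∀ q : Fin (2 ^ n), x q = 2 * x z * cdOne q - cdConj x q := by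
    intro q
    have := congrFun part1 q
    simp only [Pi.sub_apply, Pi.smul_apply, smul_eq_mul] at this
    linarith
  funext r
  have expand : cdMul x x r =
      (∑ p : Fin (2 ^ n), (cd p.val (p.val ^^^ r.val) : ℝ) * x p * (2 * x z * cdOne (xorFin p r)))
      - cdMul x (cdConj x) r := by
    simp only [cdMul]
    rw [← Finset.sum_sub_distrib]
    refine Finset.sum_congr rfl fun p _ => ?_
    rw [hx (xorFin p r)]
    ring
  have hone : (∑ p : Fin (2 ^ n), (cd p.val (p.val ^^^ r.val) : ℝ) * x p * (2 * x z * cdOne (xorFin p r)))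
      = 2 * x z * x r := by
    rw [Finset.sum_eq_single r]
    · have h1 : r.val ^^^ r.val = 0 := Nat.xor_self r.val
      have h2 : cdOne (xorFin r r) = 1 := by simp [cdOne, xorFin, h1]
      rw [h2, h1, cd_zero_right]
      push_cast; ring
    · intro p _ hp
      have : (xorFin p r).val ≠ 0 := by
        simp only [xorFin]
        intro he
        exact hp (Fin.ext (xor_eq_zero_iff.mp he))
      rw [show cdOne (xorFin p r) = 0 from if_neg this]
      ring
    · intro h; exact absurd (mem_univ r) h
  rw [expand, hone, part2]
  simp only [Pi.sub_apply, Pi.smul_apply, smul_eq_mul]
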